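/- For p ≥ 2 and 1 ≤ l < p, with ε_{p,l} = 0.1 if 2 ≤ p ≤ 4 and ε_{p,l} = min{0.1, (l+0.1)/(3.92p), (p−l+0.1)/(3.92p)} if p ≥ 5, the following inequalities hold: p·ε_{p+1,l} + (p+1)·ε_{p,l} ≤ 0.9·l and p·ε_{p+1,l+1} + (p+1)·ε_{p,l} ≤ 0.9·(p−l). -/
import Mathlib


open Real

/-- `ε_{p,l} = 0.1` if `2 ≤ p ≤ 4`, and
`ε_{p,l} = min{0.1, (l+0.1)/(3.92p), (p−l+0.1)/(3.92p)}` if `p ≥ 5`. -/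
noncomputable def eps (p l : ℕ) : ℝ :=
  if p ≤ 4 then 0.1
  else min 0.1 (min (((l : ℝ) + 0.1) / (3.92 * p)) (((p : ℝ) - (l : ℝ) + 0.1) / (3.92 * p)))

lemma eps_le_tenth (p l : ℕ) : eps p l ≤ 0.1 := by
  unfold eps; split
  · exact le_rfl
  · exact min_le_left _ _

lemma eps_nonneg (p l : ℕ) (h : l ≤ p) : 0 ≤ eps p l := by
  unfold eps; split
  · norm_num
  · have hp : (0:ℝ) < p := by
      have : 5 ≤ p := by omega
      exact_mod_cast by omega
    have hl : (l:ℝ) ≤ p := by exact_mod_cast h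
    refine le_min (by norm_num) (le_min (by positivity) ?_)
    apply div_nonneg (by linarith) (by positivity)

lemma eps_le_left (p l : ℕ) (h : 5 ≤ p) : eps p l ≤ ((l : ℝ) + 0.1) / (3.92 * p) := by
  unfold eps; rw [if_neg (by omega)]
  exact (min_le_right _ _).trans (min_le_left _ _)

lemma eps_le_right (p l : ℕ) (h : 5 ≤ p) :
    eps p l ≤ ((p : ℝ) - (l : ℝ) + 0.1) / (3.92 * p) := by
  unfold eps; rw [if_neg (by omega)]
  exact (min_le_right _ _).trans (min_le_right _ _)

/-- For `p ≥ 2` and `1 ≤ l < p`: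
`p ε_{p+1,l} + (p+1) ε_{p,l} ≤ 0.9 l` and `p ε_{p+1,l+1} + (p+1) ε_{p,l} ≤ 0.9 (p−l)`. -/
theorem eps_ineq (p l : ℕ) (hp : 2 ≤ p) (hl : 1 ≤ l) (hlp : l < p) :
    (p : ℝ) * eps (p + 1) l + ((p : ℝ) + 1) * eps p l ≤ 0.9 * l ∧
      (p : ℝ) * eps (p + 1) (l + 1) + ((p : ℝ) + 1) * eps p l ≤ 0.9 * ((p : ℝ) - l) := by
  have hP : (2:ℝ) ≤ p := by exact_mod_cast hp
  have hP0 : (0:ℝ) < p := by linarith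
  have hA : (1:ℝ) ≤ l := by exact_mod_cast hl
  have hB : (1:ℝ) ≤ (p:ℝ) - l := by
    have : (l:ℝ) + 1 ≤ p := by exact_mod_cast hlp
    linarith
  by_cases h4 : p ≤ 4
  · -- small case: all eps ≤ 0.1
    have hP4 : (p:ℝ) ≤ 4 := by exact_mod_cast h4
    have e1 := eps_le_tenth (p+1) l
    have e2 := eps_le_tenth p l
    have e3 := eps_le_tenth (p+1) (l+1)
    have n1 := eps_nonneg (p+1) l (by omega)
    have n2 := eps_nonneg p l (by omega)
    have n3 := eps_nonneg (p+1) (l+1) (by omega)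
    constructor <;> nlinarith [mul_le_mul_of_nonneg_left e1 hP0.le,
      mul_le_mul_of_nonneg_left e2 (by linarith : (0:ℝ) ≤ (p:ℝ)+1),
      mul_le_mul_of_nonneg_left e3 hP0.le]
  · -- large case: p ≥ 5
    have h5 : 5 ≤ p := by omega
    have key : ∀ (X Y a : ℝ), 1 ≤ a → 0 ≤ X → 0 ≤ Y →
        X ≤ (a + 0.1) / (3.92 * ((p:ℝ) + 1)) → Y ≤ (a + 0.1) / (3.92 * p) →
        (p:ℝ) * X + ((p:ℝ) + 1) * Y ≤ 0.9 * a := by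
      intro X Y a ha hX0 hY0 hX hY
      have hP5 : (5:ℝ) ≤ p := by exact_mod_cast h5
      have h1 : X * (3.92 * ((p:ℝ) + 1)) ≤ a + 0.1 := by
        rw [← le_div_iff₀ (by positivity)]; exact hX
      have h2 : Y * (3.92 * (p:ℝ)) ≤ a + 0.1 := by
        rw [← le_div_iff₀ (by positivity)]; exact hY
      nlinarith [mul_le_mul_of_nonneg_left h1 (by positivity : (0:ℝ) ≤ (p:ℝ)*(p:ℝ)),
        mul_le_mul_of_nonneg_left h2 (by positivity : (0:ℝ) ≤ ((p:ℝ)+1)*((p:ℝ)+1)),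
        mul_le_mul hP5 ha (by linarith) (by linarith),
        sq_nonneg ((p:ℝ) - 5), sq_nonneg ((p:ℝ)*X), sq_nonneg ((p:ℝ)*Y)]
    have c1 : ((p+1:ℕ):ℝ) = (p:ℝ) + 1 := by push_cast; ring
    constructor
    · have e1 := eps_le_left (p+1) l (by omega)
      have e2 := eps_le_left p l h5
      rw [c1] at e1
      exact key _ _ _ hA (eps_nonneg (p+1) l (by omega)) (eps_nonneg p l (by omega)) e1 e2
    · have e1 := eps_le_right (p+1) (l+1) (by omega)
      have e2 := eps_le_right p l h5
      rw [c1] at e1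
      have e1' : eps (p+1) (l+1) ≤ (((p:ℝ) - l) + 0.1) / (3.92 * ((p:ℝ) + 1)) := by
        have : ((p:ℝ) + 1) - ((l+1:ℕ):ℝ) = (p:ℝ) - l := by push_cast; ring
        rw [this] at e1; exact e1
      exact key _ _ _ hB (eps_nonneg (p+1) (l+1) (by omega)) (eps_nonneg p l (by omega)) e1' e2
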